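/- Let K ∈ ℕ, 𝔵₀ < 𝔵₁ < ... < 𝔵_K and f₀, f₁, ..., f_K be real numbers, and define coefficients c_k = (f_{min{k+1,K}} − f_k)/(𝔵_{min{k+1,K}} − 𝔵_{min{k,K−1}}) − (f_k − f_{max{k−1,0}})/(𝔵_{max{k,1}} − 𝔵_{max{k−1,0}}) for k ∈ {0,...,K}. Then for all x ∈ ℝ: f₀ + Σ_{k=0}^K c_k·max{x − 𝔵_k, 0} = ℒ(x), where ℒ is the piecewise linear interpolation of the values f₀,...,f_K at the nodes 𝔵₀,...,𝔵_K (constant outside [𝔵₀, 𝔵_K]). -/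

import Mathlib

theorem stmt13 (K : ℕ) (hK : 1 ≤ K) (𝔵 fv : ℕ → ℝ) (ℒ : ℝ → ℝ)
    (hx : ∀ k, k < K → 𝔵 k < 𝔵 (k + 1))
    (hleft : ∀ x : ℝ, x < 𝔵 0 → ℒ x = fv 0)
    (hright : ∀ x : ℝ, 𝔵 K ≤ x → ℒ x = fv K)
    (hmid : ∀ k, 1 ≤ k → k ≤ K → ∀ x : ℝ, 𝔵 (k - 1) ≤ x → x < 𝔵 k →
      ℒ x = fv (k - 1) + ((x - 𝔵 (k - 1)) / (𝔵 k - 𝔵 (k - 1))) * (fv k - fv (k - 1))) :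
    ∀ x : ℝ,
      fv 0 + ∑ k ∈ Finset.range (K + 1),
        ((fv (min (k + 1) K) - fv k) / (𝔵 (min (k + 1) K) - 𝔵 (min k (K - 1)))
          - (fv k - fv (max (k - 1) 0)) / (𝔵 (max k 1) - 𝔵 (max (k - 1) 0)))
          * max (x - 𝔵 k) 0
      = ℒ x := by
  set s : ℕ → ℝ := fun k => (fv (k + 1) - fv k) / (𝔵 (k + 1) - 𝔵 k) with hs
  set c : ℕ → ℝ := fun k =>
    ((fv (min (k + 1) K) - fv k) / (𝔵 (min (k + 1) K) - 𝔵 (min k (K - 1)))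
      - (fv k - fv (max (k - 1) 0)) / (𝔵 (max k 1) - 𝔵 (max (k - 1) 0))) with hc
  -- monotonicity
  have mono : ∀ j, j ≤ K → ∀ i, i ≤ j → 𝔵 i ≤ 𝔵 j := by
    intro j
    induction j with
    | zero => intro _ i hi; interval_cases i; exact le_rfl
    | succ n ih =>
      intro hjK i hi
      rcases Nat.lt_succ_iff_lt_or_eq.mp (Nat.lt_succ_of_le hi) with h | h
      · exact le_trans (ih (le_of_lt (Nat.lt_of_lt_of_le (Nat.lt_succ_self n) hjK))
          i (Nat.lt_succ_iff.mp h)) (le_of_lt (hx n (Nat.lt_of_succ_le hjK)))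
      · subst h; rfl
  have hne : ∀ k, k < K → 𝔵 (k + 1) - 𝔵 k ≠ 0 := by
    intro k hk; exact sub_ne_zero.mpr (ne_of_gt (hx k hk))
  have hslope : ∀ k, k < K → s k * (𝔵 (k + 1) - 𝔵 k) = fv (k + 1) - fv k := by
    intro k hk; exact div_mul_cancel₀ _ (hne k hk)
  -- coefficient simplifications
  have c0 : c 0 = s 0 := by
    simp only [hc, hs]
    rw [min_eq_left hK, min_eq_left (Nat.zero_le _)]
    simp
  have cmid : ∀ k, 1 ≤ k → k ≤ K - 1 → c k = s k - s (k - 1) := by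
    intro k h1 h2
    obtain ⟨m, rfl⟩ : ∃ m, k = m + 1 := ⟨k - 1, by omega⟩
    have h3 : m + 1 + 1 ≤ K := by omega
    simp only [hc, hs]
    rw [min_eq_left h3, min_eq_left h2, max_eq_left h1]
    simp
  have cK : c K = -s (K - 1) := by
    simp only [hc, hs]
    rw [min_eq_right (Nat.le_succ K), min_eq_right (Nat.sub_le K 1),
      max_eq_left hK, max_eq_left (Nat.zero_le _)]
    have : K - 1 + 1 = K := by omega
    rw [this]
    simp
  -- the partial sum identity
  have key : ∀ m, m + 1 ≤ K → ∀ x : ℝ,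
      ∑ n ∈ Finset.range (m + 1), c n * (x - 𝔵 n)
        = (fv m - fv 0) + (x - 𝔵 m) * s m := by
    intro m
    induction m with
    | zero => intro _ x; simp [c0]; ring
    | succ n ih =>
      intro hK' x
      rw [Finset.sum_range_succ, ih (by omega) x,
        cmid (n + 1) (by omega) (by omega)]
      have h1 : (n + 1 : ℕ) - 1 = n := by omega
      rw [h1]
      have h2 := hslope n (by omega)
      linear_combination h2
  intro x
  rcases lt_or_ge x (𝔵 0) with hx0 | hx0
  · -- left region
    rw [hleft x hx0]
    have : ∀ n ∈ Finset.range (K + 1), c n * max (x - 𝔵 n) 0 = 0 := by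
      intro n hn
      have : x < 𝔵 n := lt_of_lt_of_le hx0 (mono n (by simpa [Nat.lt_succ_iff] using hn) 0 (Nat.zero_le _))
      rw [max_eq_right (by linarith), mul_zero]
    rw [Finset.sum_congr rfl this]
    simp
  rcases le_or_gt (𝔵 K) x with hxK | hxK
  · -- right region
    rw [hright x hxK]
    have hall : ∀ n ∈ Finset.range (K + 1), c n * max (x - 𝔵 n) 0 = c n * (x - 𝔵 n) := by
      intro n hn
      have : 𝔵 n ≤ x := le_trans (mono K le_rfl n (by simpa [Nat.lt_succ_iff] using hn)) hxK
      rw [max_eq_left (by linarith)]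
    rw [Finset.sum_congr rfl hall]
    have hKm : K - 1 + 1 = K := by omega
    rw [show K + 1 = (K - 1 + 1) + 1 by omega, Finset.sum_range_succ, hKm, cK]
    have hkey := key (K - 1) (by omega) x
    rw [hKm] at hkey
    rw [hkey]
    have h2 := hslope (K - 1) (by omega)
    rw [hKm] at h2
    linear_combination h2
  · -- middle region: find the interval
    have hfind : ∀ m, m ≤ K → x < 𝔵 m →
        ∃ k, 1 ≤ k ∧ k ≤ m ∧ 𝔵 (k - 1) ≤ x ∧ x < 𝔵 k := by
      intro m
      induction m with
      | zero => intro _ h; linarith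
      | succ n ih =>
        intro hn h
        rcases le_or_gt (𝔵 n) x with h' | h'
        · exact ⟨n + 1, by omega, le_rfl, by simpa using h', h⟩
        · obtain ⟨k, hk⟩ := ih (by omega) h'
          exact ⟨k, hk.1, le_trans hk.2.1 (Nat.le_succ n), hk.2.2⟩
    obtain ⟨k, hk1, hkK, hxl, hxr⟩ := hfind K le_rfl hxK
    rw [hmid k hk1 hkK x hxl hxr]
    -- split the sum
    have hzero : ∀ n ∈ Finset.range (K + 1), n ∉ Finset.range k →
        c n * max (x - 𝔵 n) 0 = 0 := by
      intro n hn hn'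
      have hkn : k ≤ n := by simpa [Finset.mem_range, not_lt] using hn'
      have : x < 𝔵 n :=
        lt_of_lt_of_le hxr (mono n (by simpa [Nat.lt_succ_iff] using hn) k hkn)
      rw [max_eq_right (by linarith), mul_zero]
    have hsub : Finset.range k ⊆ Finset.range (K + 1) :=
      Finset.range_subset_range.mpr (by omega)
    rw [← Finset.sum_subset hsub hzero]
    have heq : ∀ n ∈ Finset.range k, c n * max (x - 𝔵 n) 0 = c n * (x - 𝔵 n) := by
      intro n hn
      have hnk : n ≤ k - 1 := by simp [Finset.mem_range] at hn; omega
      have : 𝔵 n ≤ x := le_trans (mono (k - 1) (by omega) n hnk) hxl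
      rw [max_eq_left (by linarith)]
    rw [Finset.sum_congr rfl heq]
    have hkm : k - 1 + 1 = k := by omega
    have hkey := key (k - 1) (by omega) x
    rw [hkm] at hkey
    have hsk : s (k - 1) = (fv k - fv (k - 1)) / (𝔵 k - 𝔵 (k - 1)) := by
      simp only [hs]; rw [hkm]
    rw [hsk] at hkey
    rw [hkey]
    ring
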